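/- Let N be a positive natural number, L ∈ ℝᴺˣᴺ symmetric positive definite, and define the quadratic entropy S(a) := a · (L a) for a ∈ ℝᴺ (so ∇S(a) = 2 L a). Let Ĵ, Ĝ : ℝᴺ → ℝᴺˣᴺ with Ĝ(m) symmetric positive semi-definite at the midpoint m := (a⁰ + a¹)/2, let H : ℝᴺ → ℝ be differentiable, Δt > 0, and suppose a⁰, a¹ ∈ ℝᴺ satisfy the implicit midpoint step a¹ − a⁰ = Δt · (Ĵ(m) ∇H(m) + Ĝ(m) ∇S(m)). If either Ĵ ≡ 0 or the degeneracy condition Ĵ(m) ∇S(m) = 0 holds with Ĵ(m) skew-symmetric, then S(a¹) ≥ S(a⁰). (The implicit midpoint rule satisfies the dissipation law for a quadratic entropy.) -/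

import Mathlib

open Matrix

/-- Let `L` be symmetric positive definite and `S(a) := a · (L a)` (so
`∇S(a) = 2 L a`). Suppose `Ĝ(m)` is symmetric positive semi-definite at the midpoint
`m := (a⁰ + a¹)/2`, `Δt > 0`, and `a⁰, a¹` satisfy the implicit midpoint step
`a¹ − a⁰ = Δt (Ĵ(m)∇H(m) + Ĝ(m)∇S(m))`. If either `Ĵ ≡ 0` or the degeneracy condition
`Ĵ(m)∇S(m) = 0` holds with `Ĵ(m)` skew-symmetric, then `S(a¹) ≥ S(a⁰)`: the implicit midpoint
rule satisfies the dissipation law for a quadratic entropy. -/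
theorem stmt_18 (N : ℕ) (hN : 0 < N)
    (L : Matrix (Fin N) (Fin N) ℝ) (hL : L.PosDef)
    (S : EuclideanSpace ℝ (Fin N) → ℝ)
    (hSdef : ∀ x : EuclideanSpace ℝ (Fin N), S x = x ⬝ᵥ L.mulVec x)
    (Jh Gh : EuclideanSpace ℝ (Fin N) → Matrix (Fin N) (Fin N) ℝ)
    (H : EuclideanSpace ℝ (Fin N) → ℝ) (hH : Differentiable ℝ H)
    (Δt : ℝ) (hΔt : 0 < Δt) (a0 a1 m : EuclideanSpace ℝ (Fin N))
    (hm : m = ((1 : ℝ) / 2) • (a0 + a1))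
    (hGpsd : (Gh m).PosSemidef)
    (hstep : a1 - a0 = Δt •
      (WithLp.toLp 2 ((Jh m).mulVec (gradient H m : EuclideanSpace ℝ (Fin N)) +
        (Gh m).mulVec ((2 : ℝ) • L.mulVec m)) : EuclideanSpace ℝ (Fin N)))
    (hdeg : (Jh = fun _ => 0) ∨
      ((Jh m).mulVec ((2 : ℝ) • L.mulVec m) = 0 ∧ (Jh m)ᵀ = -(Jh m))) :
    S a0 ≤ S a1 := by
  have hLsymm : Lᵀ = L := hL.1.eq
  -- symmetry of the bilinear form
  have hsym : ∀ v w : Fin N → ℝ, v ⬝ᵥ L.mulVec w = w ⬝ᵥ L.mulVec v := by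
    intro v w
    rw [Matrix.dotProduct_mulVec, ← Matrix.mulVec_transpose, hLsymm, dotProduct_comm]
  set g : Fin N → ℝ := (2 : ℝ) • L.mulVec m with hg
  have hdvec : (a1 - a0 : EuclideanSpace ℝ (Fin N)) = (a1 : Fin N → ℝ) - a0 := rfl
  have hsum : (a1 : Fin N → ℝ) + (a0 : Fin N → ℝ) = (2 : ℝ) • (m : Fin N → ℝ) := by
    rw [hm]; funext i; simp [PiLp.smul_apply, PiLp.add_apply]; ring
  have key : S a1 - S a0 = g ⬝ᵥ ((a1 : Fin N → ℝ) - a0) := by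
    have expand : ((a1 : Fin N → ℝ) + (a0 : Fin N → ℝ)) ⬝ᵥ L.mulVec ((a1 : Fin N → ℝ) - (a0 : Fin N → ℝ))
        = S a1 - S a0 := by
      rw [hSdef, hSdef, Matrix.mulVec_sub, dotProduct_sub, add_dotProduct,
        add_dotProduct]
      linarith [hsym (a0 : Fin N → ℝ) a1]
    rw [← expand, hsum, hg]
    rw [smul_dotProduct, smul_dotProduct, Matrix.dotProduct_mulVec,
      ← Matrix.mulVec_transpose, hLsymm]
  have hJterm : g ⬝ᵥ (Jh m).mulVec (gradient H m : EuclideanSpace ℝ (Fin N)) = 0 := by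
    rcases hdeg with h0 | ⟨hdeg1, hskew⟩
    · simp [h0]
    · rw [Matrix.dotProduct_mulVec, ← Matrix.mulVec_transpose, hskew]
      have : (-(Jh m)).mulVec g = 0 := by
        rw [Matrix.neg_mulVec, hdeg1]; simp
      rw [this, zero_dotProduct]
  have hGterm : 0 ≤ g ⬝ᵥ (Gh m).mulVec g := by
    simpa using hGpsd.dotProduct_mulVec_nonneg g
  have hstep' : ((a1 : Fin N → ℝ) - a0) =
      Δt • ((Jh m).mulVec (gradient H m : EuclideanSpace ℝ (Fin N)) + (Gh m).mulVec g) := by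
    exact congrArg WithLp.ofLp hstep
  have : S a1 - S a0 = Δt * (g ⬝ᵥ (Gh m).mulVec g) := by
    rw [key, hstep', dotProduct_smul, dotProduct_add, hJterm, zero_add,
      smul_eq_mul]
  nlinarith [mul_nonneg hΔt.le hGterm]
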